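/- (Proposition 3.2) Assume ℓ is convex in its first argument. Then for any nonempty D_r ⊆ D, the constrained problem min_{θ ∈ C} L̂_{D_r}(θ) over the affine subspace C := θ̂* + col(J(X)ᵀ) and the unconstrained problem min_{θ ∈ ℝ^{d_θ}} L̂_{D_r}(θ) each have a unique minimizer, and these minimizers coincide. -/

import Mathlib

open Finset Matrix

noncomputable section

/-- Squared ℓ₂ norm of a finitely-indexed real vector. -/
def sqnorm {ι : Type*} [Fintype ι] (v : ι → ℝ) : ℝ := ∑ i, v i ^ 2

/-- The linearized model `f^lin(x, θ) = f(x, θ') + J(x)(θ - θ')`, where `f0 x = f(x, θ')`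
and `J x` is the Jacobian of `f(x, ·)` at `θ'`. -/
def flin {din dout dθ : ℕ}
    (f0 : (Fin din → ℝ) → Fin dout → ℝ)
    (J : (Fin din → ℝ) → Matrix (Fin dout) (Fin dθ) ℝ)
    (θ' : Fin dθ → ℝ) (xt : Fin din → ℝ) (θ : Fin dθ → ℝ) : Fin dout → ℝ :=
  f0 xt + J xt *ᵥ (θ - θ')

/-- Regularized empirical risk `L̂_S(θ)` of the linearized model over the subset of the
dataset indexed by `S`. -/
def empRisk {din dout dθ n : ℕ}
    (f0 : (Fin din → ℝ) → Fin dout → ℝ)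
    (J : (Fin din → ℝ) → Matrix (Fin dout) (Fin dθ) ℝ)
    (θ' : Fin dθ → ℝ) (X : Fin n → Fin din → ℝ) (Y : Fin n → Fin dout → ℝ)
    (ℓ : (Fin dout → ℝ) → (Fin dout → ℝ) → ℝ) (lam : ℝ)
    (S : Finset (Fin n)) (θ : Fin dθ → ℝ) : ℝ :=
  (S.card : ℝ)⁻¹ * ∑ i ∈ S, (ℓ (flin f0 J θ' (X i) θ) (Y i) + lam / 2 * sqnorm (θ - θ'))

/-- Gradient of the loss `ℓ(·, y)` in its first argument, as a vector. -/
def gradloss {dout : ℕ} (ℓ : (Fin dout → ℝ) → (Fin dout → ℝ) → ℝ)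
    (ytgt u : Fin dout → ℝ) : Fin dout → ℝ :=
  fun a => fderiv ℝ (fun v => ℓ v ytgt) u (Pi.single a 1)

/-- Hessian of the loss `ℓ(·, y)` in its first argument, as a matrix. -/
def hessloss {dout : ℕ} (ℓ : (Fin dout → ℝ) → (Fin dout → ℝ) → ℝ)
    (ytgt u : Fin dout → ℝ) : Fin dout → Fin dout → ℝ :=
  fun a b => fderiv ℝ (fun v => fderiv ℝ (fun w => ℓ w ytgt) v (Pi.single b 1)) u (Pi.single a 1)

/-- Stacked Jacobian `J(X) ∈ ℝ^{d_out·n × d_θ}`, whose `i`-th row block is `J(x_i)`. -/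
def JX {din dout dθ n : ℕ}
    (J : (Fin din → ℝ) → Matrix (Fin dout) (Fin dθ) ℝ)
    (X : Fin n → Fin din → ℝ) : Matrix (Fin n × Fin dout) (Fin dθ) ℝ :=
  fun q p => J (X q.1) q.2 p

/-- Empirical NTK Gram matrix `K = K(X, X) = J(X) J(X)ᵀ`. -/
def Kmat {din dout dθ n : ℕ}
    (J : (Fin din → ℝ) → Matrix (Fin dout) (Fin dθ) ℝ)
    (X : Fin n → Fin din → ℝ) : Matrix (Fin n × Fin dout) (Fin n × Fin dout) ℝ :=
  JX J X * (JX J X)ᵀ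

/-- NTK row block `K(x, X) = J(x) J(X)ᵀ ∈ ℝ^{d_out × d_out·n}`. -/
def KxX {din dout dθ n : ℕ}
    (J : (Fin din → ℝ) → Matrix (Fin dout) (Fin dθ) ℝ)
    (X : Fin n → Fin din → ℝ) (xt : Fin din → ℝ) : Matrix (Fin dout) (Fin n × Fin dout) ℝ :=
  J xt * (JX J X)ᵀ

/-- Reparameterization `φ(Δα) = θ̂* + J(X)ᵀ Δα`. -/
def phi {din dout dθ n : ℕ}
    (J : (Fin din → ℝ) → Matrix (Fin dout) (Fin dθ) ℝ)
    (X : Fin n → Fin din → ℝ) (θstar : Fin dθ → ℝ)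
    (Δα : Fin n × Fin dout → ℝ) : Fin dθ → ℝ :=
  θstar + (JX J X)ᵀ *ᵥ Δα

/-- Reparameterized model `g^lin(x, Δα) = f^lin(x, θ̂*) + K(x, X) Δα`. -/
def glin {din dout dθ n : ℕ}
    (f0 : (Fin din → ℝ) → Fin dout → ℝ)
    (J : (Fin din → ℝ) → Matrix (Fin dout) (Fin dθ) ℝ)
    (θ' : Fin dθ → ℝ) (X : Fin n → Fin din → ℝ) (θstar : Fin dθ → ℝ)
    (xt : Fin din → ℝ) (Δα : Fin n × Fin dout → ℝ) : Fin dout → ℝ :=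
  flin f0 J θ' xt θstar + KxX J X xt *ᵥ Δα

/-- Dual risk `L̃_S(Δα) = (1/|S|) Σ_{(x,y)∈S} ( ℓ(g^lin(x, Δα), y) + (λ/2)‖φ(Δα) − θ'‖₂² )`. -/
def dualRisk {din dout dθ n : ℕ}
    (f0 : (Fin din → ℝ) → Fin dout → ℝ)
    (J : (Fin din → ℝ) → Matrix (Fin dout) (Fin dθ) ℝ)
    (θ' : Fin dθ → ℝ) (X : Fin n → Fin din → ℝ) (Y : Fin n → Fin dout → ℝ)
    (ℓ : (Fin dout → ℝ) → (Fin dout → ℝ) → ℝ) (lam : ℝ) (θstar : Fin dθ → ℝ)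
    (S : Finset (Fin n)) (Δα : Fin n × Fin dout → ℝ) : ℝ :=
  (S.card : ℝ)⁻¹ *
    ∑ i ∈ S, (ℓ (glin f0 J θ' X θstar (X i) Δα) (Y i) +
      lam / 2 * sqnorm (phi J X θstar Δα - θ'))

/-- The dual coefficient vector `Δα_r*` of Proposition 3.1: on the forget indices
(`q.1 ∉ Dr`) it is `(1/λ) ∇_{f^lin(X_f, θ̂*)} L̂_D`, and on the retain indices (`q.1 ∈ Dr`)
it is `−(1/λ)( ∇_{f^lin(X_r, θ̂_r*)} L̂_{D_r} − ∇_{f^lin(X_r, θ̂*)} L̂_D )`. -/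
def dalpha {din dout dθ n : ℕ}
    (f0 : (Fin din → ℝ) → Fin dout → ℝ)
    (J : (Fin din → ℝ) → Matrix (Fin dout) (Fin dθ) ℝ)
    (θ' : Fin dθ → ℝ) (X : Fin n → Fin din → ℝ) (Y : Fin n → Fin dout → ℝ)
    (ℓ : (Fin dout → ℝ) → (Fin dout → ℝ) → ℝ) (lam : ℝ)
    (Dr : Finset (Fin n)) (θstar θrstar : Fin dθ → ℝ) :
    Fin n × Fin dout → ℝ :=
  fun q =>
    if q.1 ∈ Dr then
      -lam⁻¹ * ((Dr.card : ℝ)⁻¹ * gradloss ℓ (Y q.1) (flin f0 J θ' (X q.1) θrstar) q.2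
        - (n : ℝ)⁻¹ * gradloss ℓ (Y q.1) (flin f0 J θ' (X q.1) θstar) q.2)
    else
      lam⁻¹ * ((n : ℝ)⁻¹ * gradloss ℓ (Y q.1) (flin f0 J θ' (X q.1) θstar) q.2)

open scoped InnerProductSpace

-- helpers
lemma sqnorm_nonneg' {ι : Type*} [Fintype ι] (v : ι → ℝ) : 0 ≤ sqnorm v :=
  Finset.sum_nonneg fun i _ => by positivity

lemma sqnorm_pos_of_ne {ι : Type*} [Fintype ι] {v : ι → ℝ} (h : v ≠ 0) : 0 < sqnorm v := by
  obtain ⟨i, hi⟩ : ∃ i, v i ≠ 0 := by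
    by_contra hc; push_neg at hc; exact h (funext hc)
  exact Finset.sum_pos' (fun j _ => by positivity) ⟨i, Finset.mem_univ i, by positivity⟩

lemma sqnorm_eq_norm_sq {d : ℕ} (v : EuclideanSpace ℝ (Fin d)) : sqnorm v = ‖v‖ ^ 2 := by
  rw [EuclideanSpace.norm_eq, Real.sq_sqrt (by positivity)]
  simp [sqnorm, sq_abs]

lemma sqnorm_midpoint {d : ℕ} (a b t : Fin d → ℝ) :
    sqnorm ((1/2:ℝ) • a + (1/2:ℝ) • b - t)
      = 1/2 * sqnorm (a - t) + 1/2 * sqnorm (b - t) - 1/4 * sqnorm (a - b) := by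
  simp only [sqnorm, Finset.mul_sum, ← Finset.sum_add_distrib, ← Finset.sum_sub_distrib]
  refine Finset.sum_congr rfl fun i _ => ?_
  simp only [Pi.add_apply, Pi.sub_apply, Pi.smul_apply, smul_eq_mul]
  ring

lemma flin_midpoint {din dout dθ : ℕ}
    (f0 : (Fin din → ℝ) → Fin dout → ℝ)
    (J : (Fin din → ℝ) → Matrix (Fin dout) (Fin dθ) ℝ)
    (θ' : Fin dθ → ℝ) (x : Fin din → ℝ) (a b : Fin dθ → ℝ) :
    flin f0 J θ' x ((1/2:ℝ) • a + (1/2:ℝ) • b)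
      = (1/2:ℝ) • flin f0 J θ' x a + (1/2:ℝ) • flin f0 J θ' x b := by
  funext c
  simp only [flin, Pi.add_apply, Pi.smul_apply, Pi.sub_apply, smul_eq_mul, Matrix.mulVec,
    dotProduct]
  rw [mul_add, mul_add, Finset.mul_sum, Finset.mul_sum,
    show (∑ p, J x c p * ((1/2 * a p + 1/2 * b p) - θ' p))
      = ∑ p, (1/2 * (J x c p * (a p - θ' p)) + 1/2 * (J x c p * (b p - θ' p)))
      from Finset.sum_congr rfl fun p _ => by ring,
    Finset.sum_add_distrib]
  ring

lemma empRisk_lb {din dout dθ n : ℕ}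
    (f0 : (Fin din → ℝ) → Fin dout → ℝ)
    (J : (Fin din → ℝ) → Matrix (Fin dout) (Fin dθ) ℝ)
    (θ' : Fin dθ → ℝ) (X : Fin n → Fin din → ℝ) (Y : Fin n → Fin dout → ℝ)
    (ℓ : (Fin dout → ℝ) → (Fin dout → ℝ) → ℝ) (lam : ℝ)
    (hℓ0 : ∀ u ytgt, 0 ≤ ℓ u ytgt)
    {S : Finset (Fin n)} (hS : S.Nonempty) (θ : Fin dθ → ℝ) :
    lam / 2 * sqnorm (θ - θ') ≤ empRisk f0 J θ' X Y ℓ lam S θ := by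
  have hcard : (0:ℝ) < (S.card : ℝ) := by exact_mod_cast Finset.card_pos.mpr hS
  have h1 : (S.card : ℝ) * (lam / 2 * sqnorm (θ - θ'))
      ≤ ∑ i ∈ S, (ℓ (flin f0 J θ' (X i) θ) (Y i) + lam / 2 * sqnorm (θ - θ')) := by
    calc (S.card : ℝ) * (lam / 2 * sqnorm (θ - θ'))
        = ∑ _i ∈ S, lam / 2 * sqnorm (θ - θ') := by rw [Finset.sum_const, nsmul_eq_mul]
      _ ≤ _ := Finset.sum_le_sum fun i _ => le_add_of_nonneg_left (hℓ0 _ _)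
  have := mul_le_mul_of_nonneg_left h1 (le_of_lt (inv_pos.mpr hcard))
  rw [← mul_assoc, inv_mul_cancel₀ (ne_of_gt hcard), one_mul] at this
  exact this

lemma empRisk_midpoint {din dout dθ n : ℕ}
    (f0 : (Fin din → ℝ) → Fin dout → ℝ)
    (J : (Fin din → ℝ) → Matrix (Fin dout) (Fin dθ) ℝ)
    (θ' : Fin dθ → ℝ) (X : Fin n → Fin din → ℝ) (Y : Fin n → Fin dout → ℝ)
    (ℓ : (Fin dout → ℝ) → (Fin dout → ℝ) → ℝ) (lam : ℝ)
    (hconv : ∀ ytgt, ConvexOn ℝ Set.univ fun u => ℓ u ytgt)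
    {S : Finset (Fin n)} (hS : S.Nonempty) (a b : Fin dθ → ℝ) :
    empRisk f0 J θ' X Y ℓ lam S ((1/2:ℝ) • a + (1/2:ℝ) • b)
      ≤ 1/2 * empRisk f0 J θ' X Y ℓ lam S a + 1/2 * empRisk f0 J θ' X Y ℓ lam S b
        - lam / 8 * sqnorm (a - b) := by
  have hcard : (0:ℝ) < (S.card : ℝ) := by exact_mod_cast Finset.card_pos.mpr hS
  set m := (1/2:ℝ) • a + (1/2:ℝ) • b with hm
  have hterm : ∀ i ∈ S,
      ℓ (flin f0 J θ' (X i) m) (Y i) + lam / 2 * sqnorm (m - θ')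
      ≤ 1/2 * (ℓ (flin f0 J θ' (X i) a) (Y i) + lam / 2 * sqnorm (a - θ'))
        + 1/2 * (ℓ (flin f0 J θ' (X i) b) (Y i) + lam / 2 * sqnorm (b - θ'))
        - lam / 8 * sqnorm (a - b) := by
    intro i _
    have hℓ : ℓ (flin f0 J θ' (X i) m) (Y i)
        ≤ 1/2 * ℓ (flin f0 J θ' (X i) a) (Y i) + 1/2 * ℓ (flin f0 J θ' (X i) b) (Y i) := by
      have := (hconv (Y i)).2 (Set.mem_univ (flin f0 J θ' (X i) a))
        (Set.mem_univ (flin f0 J θ' (X i) b)) (by norm_num : (0:ℝ) ≤ 1/2)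
        (by norm_num : (0:ℝ) ≤ 1/2) (by norm_num)
      rw [hm, flin_midpoint]
      simpa [smul_eq_mul] using this
    have hsq2 : lam / 2 * sqnorm (m - θ')
        = 1/2 * (lam / 2 * sqnorm (a - θ')) + 1/2 * (lam / 2 * sqnorm (b - θ'))
          - lam / 8 * sqnorm (a - b) := by
      rw [hm, sqnorm_midpoint]; ring
    linarith [hsq2, hℓ]
  have hsum := Finset.sum_le_sum hterm
  have hsum2 : ∑ i ∈ S, (1/2 * (ℓ (flin f0 J θ' (X i) a) (Y i) + lam / 2 * sqnorm (a - θ'))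
        + 1/2 * (ℓ (flin f0 J θ' (X i) b) (Y i) + lam / 2 * sqnorm (b - θ'))
        - lam / 8 * sqnorm (a - b))
      = 1/2 * ∑ i ∈ S, (ℓ (flin f0 J θ' (X i) a) (Y i) + lam / 2 * sqnorm (a - θ'))
        + 1/2 * ∑ i ∈ S, (ℓ (flin f0 J θ' (X i) b) (Y i) + lam / 2 * sqnorm (b - θ'))
        - (S.card : ℝ) * (lam / 8 * sqnorm (a - b)) := by
    rw [Finset.sum_sub_distrib, Finset.sum_add_distrib, ← Finset.mul_sum, ← Finset.mul_sum,
      Finset.sum_const, nsmul_eq_mul]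
  rw [hsum2] at hsum
  unfold empRisk
  have h2 := mul_le_mul_of_nonneg_left hsum (le_of_lt (inv_pos.mpr hcard))
  have hc1 : (S.card : ℝ)⁻¹ * (S.card : ℝ) = 1 := inv_mul_cancel₀ (ne_of_gt hcard)
  calc (S.card : ℝ)⁻¹ * ∑ i ∈ S, (ℓ (flin f0 J θ' (X i) m) (Y i) + lam / 2 * sqnorm (m - θ'))
      ≤ (S.card : ℝ)⁻¹ * (1/2 * ∑ i ∈ S, (ℓ (flin f0 J θ' (X i) a) (Y i) + lam / 2 * sqnorm (a - θ'))
        + 1/2 * ∑ i ∈ S, (ℓ (flin f0 J θ' (X i) b) (Y i) + lam / 2 * sqnorm (b - θ'))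
        - (S.card : ℝ) * (lam / 8 * sqnorm (a - b))) := h2
    _ = _ := by field_simp


lemma min_mem_span {din dout dθ n : ℕ}
    (f0 : (Fin din → ℝ) → Fin dout → ℝ)
    (J : (Fin din → ℝ) → Matrix (Fin dout) (Fin dθ) ℝ)
    (θ' : Fin dθ → ℝ) (X : Fin n → Fin din → ℝ) (Y : Fin n → Fin dout → ℝ)
    (ℓ : (Fin dout → ℝ) → (Fin dout → ℝ) → ℝ) {lam : ℝ} (hlam : 0 < lam)
    {S : Finset (Fin n)} (hS : S.Nonempty) {θ : Fin dθ → ℝ}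
    (hmin : ∀ θ2, empRisk f0 J θ' X Y ℓ lam S θ ≤ empRisk f0 J θ' X Y ℓ lam S θ2) :
    ∃ c : Fin n × Fin dout → ℝ, (JX J X)ᵀ *ᵥ c = θ - θ' := by
  classical
  have hcard : (0:ℝ) < (S.card : ℝ) := by exact_mod_cast Finset.card_pos.mpr hS
  set E := EuclideanSpace ℝ (Fin dθ)
  set row : Fin n × Fin dout → E := fun q => WithLp.toLp 2 (fun p => JX J X q p : Fin dθ → ℝ) with hrowdef
  set V : Submodule ℝ E := Submodule.span ℝ (Set.range row) with hV
  set u : E := WithLp.toLp 2 (θ - θ' : Fin dθ → ℝ) with hu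
  obtain ⟨y, hy, z, hz, huyz⟩ := V.exists_add_mem_mem_orthogonal u
  have hupt : ∀ p, θ p - θ' p = y p + z p := fun p => by show u p = (y + z) p; rw [huyz]
  have hrowV : ∀ q, row q ∈ V := fun q => Submodule.subset_span ⟨q, rfl⟩
  have hinner : ∀ q, ∑ p, JX J X q p * z p = 0 := by
    intro q
    have h0 : ⟪row q, z⟫_ℝ = 0 := (Submodule.mem_orthogonal V z).mp hz (row q) (hrowV q)
    rw [PiLp.inner_apply] at h0
    simpa [hrowdef, RCLike.inner_apply, conj_trivial, mul_comm] using h0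
  have hyz : ∑ p, y p * z p = 0 := by
    have h0 : ⟪y, z⟫_ℝ = 0 := (Submodule.mem_orthogonal V z).mp hz y hy
    rw [PiLp.inner_apply] at h0
    simpa [RCLike.inner_apply, conj_trivial, mul_comm] using h0
  set θp : Fin dθ → ℝ := fun p => θ' p + y p with hθp
  have hflin : ∀ i : Fin n, flin f0 J θ' (X i) θp = flin f0 J θ' (X i) θ := by
    intro i
    funext a
    have h1 : ∑ p, J (X i) a p * (θ p - θ' p)
        = ∑ p, J (X i) a p * y p + ∑ p, J (X i) a p * z p := by
      rw [← Finset.sum_add_distrib]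
      exact Finset.sum_congr rfl fun p _ => by rw [hupt p]; ring
    have h2 : ∑ p, J (X i) a p * z p = 0 := hinner (i, a)
    simp only [flin, Pi.add_apply, Matrix.mulVec, dotProduct, Pi.sub_apply, hθp]
    rw [h1, h2]
    simp
  have hsqy : sqnorm (θp - θ') = sqnorm (fun p => y p) := by
    unfold sqnorm
    exact Finset.sum_congr rfl fun p _ => by simp [hθp]
  have hsqu : sqnorm (θ - θ') = sqnorm (fun p => y p) + sqnorm (fun p => z p) := by
    unfold sqnorm
    rw [← Finset.sum_add_distrib]
    have : ∀ p, (θ p - θ' p)^2 = y p ^ 2 + z p ^ 2 + 2 * (y p * z p) := by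
      intro p; rw [hupt p]; ring
    calc ∑ p, (θ - θ') p ^ 2 = ∑ p, (y p ^ 2 + z p ^ 2 + 2 * (y p * z p)) :=
          Finset.sum_congr rfl fun p _ => by rw [Pi.sub_apply, this p]
      _ = ∑ p, (y p ^ 2 + z p ^ 2) + 2 * ∑ p, y p * z p := by
          rw [Finset.sum_add_distrib, Finset.mul_sum]
      _ = _ := by rw [hyz]; ring
  have hz0 : (fun p => z p) = (0 : Fin dθ → ℝ) := by
    by_contra hzz
    have hpos : 0 < sqnorm (fun p => z p) := sqnorm_pos_of_ne hzz
    have hlt : empRisk f0 J θ' X Y ℓ lam S θp < empRisk f0 J θ' X Y ℓ lam S θ := by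
      unfold empRisk
      apply mul_lt_mul_of_pos_left _ (inv_pos.mpr hcard)
      apply Finset.sum_lt_sum_of_nonempty hS
      intro i _
      rw [hflin i, hsqy, hsqu]
      have : 0 < lam / 2 * sqnorm (fun p => z p) := by positivity
      linarith
    exact absurd (hmin θp) (not_le.mpr hlt)
  have hθy : ∀ p, θ p - θ' p = y p := by
    intro p
    have : z p = 0 := congrFun hz0 p
    rw [hupt p, this, add_zero]
  obtain ⟨c, hc⟩ := (Submodule.mem_span_range_iff_exists_fun ℝ).mp hy
  refine ⟨c, ?_⟩
  funext p
  have hcp : (∑ q, c q • row q) p = y p := by rw [hc]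
  rw [show ((∑ q, c q • row q) p) = ∑ q, c q * JX J X q p from by
    rw [WithLp.ofLp_sum, Finset.sum_apply]; exact Finset.sum_congr rfl fun q _ => rfl] at hcp
  have hup : (θ - θ') p = y p := hθy p
  rw [Matrix.mulVec, hup, ← hcp]
  unfold dotProduct
  exact Finset.sum_congr rfl fun q _ => by simp [Matrix.transpose_apply, mul_comm]


/-- Proposition 3.2: if `ℓ` is convex in its first argument, then for any
nonempty `D_r ⊆ D` the constrained problem `min_{θ ∈ C} L̂_{D_r}(θ)` over
`C = θ̂* + col(J(X)ᵀ) = range φ` and the unconstrained problem `min_θ L̂_{D_r}(θ)` each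
have a unique minimizer, and these minimizers coincide. -/
theorem stmt_4 {din dout dθ n : ℕ} (hn : 0 < n)
    (f0 : (Fin din → ℝ) → Fin dout → ℝ)
    (J : (Fin din → ℝ) → Matrix (Fin dout) (Fin dθ) ℝ)
    (θ' : Fin dθ → ℝ) (X : Fin n → Fin din → ℝ) (Y : Fin n → Fin dout → ℝ)
    (ℓ : (Fin dout → ℝ) → (Fin dout → ℝ) → ℝ) (lam : ℝ)
    (hℓ0 : ∀ u ytgt, 0 ≤ ℓ u ytgt)
    (hconv : ∀ ytgt, ConvexOn ℝ Set.univ fun u => ℓ u ytgt)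
    (hdiff : ∀ ytgt, Differentiable ℝ fun u => ℓ u ytgt)
    (hlam : 0 < lam)
    (θstar : Fin dθ → ℝ)
    (hmin : ∀ θ : Fin dθ → ℝ,
      empRisk f0 J θ' X Y ℓ lam Finset.univ θstar ≤ empRisk f0 J θ' X Y ℓ lam Finset.univ θ)
    (Dr : Finset (Fin n)) (hDr : Dr.Nonempty) :
    ∃ θm : Fin dθ → ℝ,
      θm ∈ Set.range (phi J X θstar) ∧
      (∀ θ ∈ Set.range (phi J X θstar),
        empRisk f0 J θ' X Y ℓ lam Dr θm ≤ empRisk f0 J θ' X Y ℓ lam Dr θ) ∧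
      (∀ θ : Fin dθ → ℝ, empRisk f0 J θ' X Y ℓ lam Dr θm ≤ empRisk f0 J θ' X Y ℓ lam Dr θ) ∧
      (∀ θc ∈ Set.range (phi J X θstar),
        (∀ θ ∈ Set.range (phi J X θstar),
          empRisk f0 J θ' X Y ℓ lam Dr θc ≤ empRisk f0 J θ' X Y ℓ lam Dr θ) → θc = θm) ∧
      (∀ θu : Fin dθ → ℝ,
        (∀ θ : Fin dθ → ℝ, empRisk f0 J θ' X Y ℓ lam Dr θu ≤ empRisk f0 J θ' X Y ℓ lam Dr θ) →
          θu = θm) := by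
  classical
  -- uniqueness of global minimizers
  have huniq : ∀ a b : Fin dθ → ℝ,
      (∀ t, empRisk f0 J θ' X Y ℓ lam Dr a ≤ empRisk f0 J θ' X Y ℓ lam Dr t) →
      (∀ t, empRisk f0 J θ' X Y ℓ lam Dr b ≤ empRisk f0 J θ' X Y ℓ lam Dr t) → a = b := by
    intro a b ha hb
    by_contra hne
    have hpos : 0 < sqnorm (a - b) := sqnorm_pos_of_ne (sub_ne_zero.mpr hne)
    have h1 := empRisk_midpoint f0 J θ' X Y ℓ lam hconv hDr a b
    have h2 := ha ((1/2:ℝ) • a + (1/2:ℝ) • b)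
    have h3 := hb a
    have h4 := ha b
    have h5 : 0 < lam / 8 * sqnorm (a - b) := by positivity
    linarith
  -- existence of a global minimizer
  have hE : ∃ θm : Fin dθ → ℝ, ∀ t : Fin dθ → ℝ,
      empRisk f0 J θ' X Y ℓ lam Dr θm ≤ empRisk f0 J θ' X Y ℓ lam Dr t := by
    set eqv := PiLp.continuousLinearEquiv 2 ℝ (fun _ : Fin dθ => ℝ) with heqv
    have hcontPi : Continuous (empRisk f0 J θ' X Y ℓ lam Dr) := by
      unfold empRisk
      apply Continuous.mul continuous_const
      apply continuous_finset_sum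
      intro i _
      apply Continuous.add
      · apply Continuous.comp (hdiff (Y i)).continuous
        apply continuous_pi
        intro a
        show Continuous fun t : Fin dθ → ℝ =>
          f0 (X i) a + ∑ p, J (X i) a p * (t p - θ' p)
        exact continuous_const.add (continuous_finset_sum _ fun p _ =>
          continuous_const.mul ((continuous_apply p).sub continuous_const))
      · show Continuous fun t : Fin dθ → ℝ => lam / 2 * ∑ p, (t p - θ' p) ^ 2
        exact continuous_const.mul (continuous_finset_sum _ fun p _ =>
          ((continuous_apply p).sub continuous_const).pow 2)
    have hcont : Continuous fun t : EuclideanSpace ℝ (Fin dθ) =>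
        empRisk f0 J θ' X Y ℓ lam Dr (eqv t) := hcontPi.comp eqv.continuous
    have hM0 : 0 ≤ empRisk f0 J θ' X Y ℓ lam Dr θ' := by
      have hlb := empRisk_lb f0 J θ' X Y ℓ lam hℓ0 hDr θ'
      have h0 : sqnorm (θ' - θ') = 0 := by simp [sqnorm]
      rw [h0, mul_zero] at hlb
      exact hlb
    set M := empRisk f0 J θ' X Y ℓ lam Dr θ' with hM
    set r := Real.sqrt (2 * (M + 1) / lam) with hr
    have hr2 : r ^ 2 = 2 * (M + 1) / lam := Real.sq_sqrt (by positivity)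
    have hd0 : (0:ℝ) ≤ r := Real.sqrt_nonneg _
    set c0 : EuclideanSpace ℝ (Fin dθ) := eqv.symm θ' with hc0
    have hKne : (Metric.closedBall c0 r).Nonempty :=
      ⟨c0, Metric.mem_closedBall_self hd0⟩
    obtain ⟨θmE, hθmK, hθmmin⟩ :=
      (isCompact_closedBall c0 r).exists_isMinOn hKne hcont.continuousOn
    refine ⟨eqv θmE, fun t => ?_⟩
    by_cases ht : eqv.symm t ∈ Metric.closedBall c0 r
    · have h := isMinOn_iff.mp hθmmin _ ht
      rwa [ContinuousLinearEquiv.apply_symm_apply] at h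
    · have hd : r < dist (eqv.symm t) c0 :=
        lt_of_not_ge fun h => ht (Metric.mem_closedBall.mpr h)
      have hlow := empRisk_lb f0 J θ' X Y ℓ lam hℓ0 hDr t
      have hsub : eqv.symm t - c0 = eqv.symm (t - θ') := by rw [hc0, ← map_sub]
      have hsq : sqnorm (t - θ') = ‖eqv.symm t - c0‖ ^ 2 := by
        rw [hsub]
        exact sqnorm_eq_norm_sq (eqv.symm (t - θ'))
      have h1 : 2 * (M + 1) / lam < sqnorm (t - θ') := by
        rw [hsq, ← hr2, ← dist_eq_norm]
        exact pow_lt_pow_left₀ hd hd0 two_ne_zero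
      have h2 : M + 1 < lam / 2 * sqnorm (t - θ') := by
        have hh := mul_lt_mul_of_pos_left h1 (by positivity : (0:ℝ) < lam / 2)
        rw [show lam / 2 * (2 * (M + 1) / lam) = M + 1 by field_simp] at hh
        exact hh
      have h3 : empRisk f0 J θ' X Y ℓ lam Dr (eqv θmE) ≤ M := by
        have h := isMinOn_iff.mp hθmmin c0 (Metric.mem_closedBall_self hd0)
        rw [hc0, ContinuousLinearEquiv.apply_symm_apply] at h
        exact h
      linarith
  obtain ⟨θm, hθm_global⟩ := hE
  -- membership in the affine subspace
  obtain ⟨cm, hcm⟩ := min_mem_span f0 J θ' X Y ℓ hlam hDr hθm_global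
  have hn' : (Finset.univ : Finset (Fin n)).Nonempty := ⟨⟨0, hn⟩, Finset.mem_univ _⟩
  obtain ⟨cs, hcs⟩ := min_mem_span f0 J θ' X Y ℓ hlam hn' hmin
  have hmem : θm ∈ Set.range (phi J X θstar) := by
    refine ⟨cm - cs, ?_⟩
    unfold phi
    rw [Matrix.mulVec_sub, hcm, hcs]
    funext p
    simp only [Pi.add_apply, Pi.sub_apply]
    ring
  refine ⟨θm, hmem, fun t _ => hθm_global t, hθm_global, ?_, ?_⟩
  · intro θc hθc hθcmin
    have hθc_global : ∀ t, empRisk f0 J θ' X Y ℓ lam Dr θc ≤ empRisk f0 J θ' X Y ℓ lam Dr t :=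
      fun t => le_trans (hθcmin θm hmem) (hθm_global t)
    exact huniq θc θm hθc_global hθm_global
  · intro θu hθu
    exact huniq θu θm hθu hθm_global
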